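/- In k = ℚ(√5), let π_1 = 33 + 8√5, π_2 = 17, π_3 = (23 + 5√5)/2, and ε = (1+√5)/2 the fundamental unit. Then N_{k/ℚ}(π_1) = 769, N_{k/ℚ}(π_3) = 101, and π_1, π_2, π_3 generate distinct prime ideals of O_k with norms ≡ 1 mod 4; moreover each of ε, π_1, π_2, π_3 is a square modulo each of the prime ideals (π_i) for i distinct from its own index, i.e. the quadratic residue symbols (ε/π_i) = 1 for i = 1,2,3 and (π_i/π_j) = 1 for all 1 ≤ i ≠ j ≤ 3. -/

import Mathlib

open NumberField

lemma sqrt5_not_rat (K : Type) [Field K] [NumberField K]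
    (s : K) (hs : s ^ 2 = 5) (q : ℚ) : (q : K) ≠ s := by
  intro h
  have hq : q ^ 2 = 5 := by
    have : ((q ^ 2 : ℚ) : K) = ((5 : ℚ) : K) := by push_cast; rw [h, hs]
    exact_mod_cast this
  have h5 : Irrational (Real.sqrt 5) := by
    simpa using (Nat.Prime.irrational_sqrt (p := 5) (by norm_num))
  apply h5
  refine ⟨|q|, ?_⟩
  have : ((q : ℝ)) ^ 2 = 5 := by exact_mod_cast congrArg (fun x : ℚ => ((x : ℝ))) hq
  rw [show ((5:ℝ)) = (q:ℝ)^2 from this.symm, Real.sqrt_sq_eq_abs]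
  push_cast
  ring

lemma norm_eval (K : Type) [Field K] [NumberField K]
    (hdeg : Module.finrank ℚ K = 2) (s : K) (hs : s ^ 2 = 5) (a b : ℚ) :
    Algebra.norm ℚ ((a : K) + (b : K) * s) = a ^ 2 - 5 * b ^ 2 := by
  have hs0 : s ≠ 0 := by intro h; rw [h] at hs; norm_num at hs
  have hli : LinearIndependent ℚ ![(1 : K), s] := by
    rw [linearIndependent_fin2]
    refine ⟨by simpa using hs0, fun c hc => ?_⟩
    simp only [Matrix.cons_val_one, Matrix.head_cons, Matrix.cons_val_zero] at hc
    have hc0 : c ≠ 0 := by rintro rfl; simp at hc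
    apply sqrt5_not_rat K s hs c⁻¹
    rw [Rat.smul_def] at hc
    push_cast
    exact inv_eq_of_mul_eq_one_right hc
  let B : Module.Basis (Fin 2) ℚ K :=
    basisOfLinearIndependentOfCardEqFinrank hli (by simp [hdeg])
  have hB0 : B 0 = 1 := by
    simp [B, coe_basisOfLinearIndependentOfCardEqFinrank]
  have hB1 : B 1 = s := by
    simp [B, coe_basisOfLinearIndependentOfCardEqFinrank]
  have hrepr : ∀ c d : ℚ, B.repr ((c : K) + (d : K) * s)
      = Finsupp.single 0 c + Finsupp.single 1 d := by
    intro c d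
    have h : (c : K) + (d : K) * s = c • B 0 + d • B 1 := by
      rw [hB0, hB1, Rat.smul_def, Rat.smul_def]; ring
    rw [h, map_add, map_smul, map_smul, B.repr_self, B.repr_self,
      Finsupp.smul_single, Finsupp.smul_single, smul_eq_mul, smul_eq_mul,
      mul_one, mul_one]
  rw [Algebra.norm_eq_matrix_det B, Matrix.det_fin_two,
    Algebra.leftMulMatrix_eq_repr_mul, Algebra.leftMulMatrix_eq_repr_mul,
    Algebra.leftMulMatrix_eq_repr_mul, Algebra.leftMulMatrix_eq_repr_mul,
    hB0, hB1]
  have e0 : ((a : K) + (b : K) * s) * 1 = (a : K) + (b : K) * s := mul_one _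
  have e1 : ((a : K) + (b : K) * s) * s = ((5 * b : ℚ) : K) + ((a : ℚ) : K) * s := by
    push_cast
    linear_combination (b : K) * hs
  rw [e0, e1, hrepr, hrepr]
  simp [Finsupp.single_apply]
  ring

set_option maxHeartbeats 1000000 in
set_option synthInstance.maxHeartbeats 200000 in
/-- in `K = ℚ(√5)` with `ε = (1+√5)/2` the fundamental unit, the elements
`π₁ = 33 + 8√5`, `π₂ = 17`, `π₃ = (23 + 5√5)/2` of `𝓞 K` satisfy `N(π₁) = 769`,
`N(π₃) = 101`; they generate distinct prime ideals with norms `≡ 1 mod 4`; and all the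
quadratic residue symbols `(ε/π_i) = 1` (`i = 1, 2, 3`) and `(π_i/π_j) = 1`
(`1 ≤ i ≠ j ≤ 3`) hold, i.e. each is a square modulo the relevant prime. -/
theorem borromean_primes_example
    (K : Type) [Field K] [NumberField K]
    (hdeg : Module.finrank ℚ K = 2)
    (s : K) (hs : s ^ 2 = 5)
    (ε : (𝓞 K)ˣ)
    (hεval : algebraMap (𝓞 K) K (ε : 𝓞 K) = (1 + s) / 2)
    (hεfund : ∀ u : (𝓞 K)ˣ, ∃ n : ℤ, u = ε ^ n ∨ u = -ε ^ n)
    (π₁ π₂ π₃ : 𝓞 K)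
    (h1 : algebraMap (𝓞 K) K π₁ = 33 + 8 * s)
    (h2 : algebraMap (𝓞 K) K π₂ = 17)
    (h3 : algebraMap (𝓞 K) K π₃ = (23 + 5 * s) / 2) :
    Algebra.norm ℚ (algebraMap (𝓞 K) K π₁) = 769 ∧
    Algebra.norm ℚ (algebraMap (𝓞 K) K π₃) = 101 ∧
    (Prime π₁ ∧ Prime π₂ ∧ Prime π₃) ∧
    (Ideal.span {π₁} ≠ Ideal.span ({π₂} : Set (𝓞 K)) ∧
      Ideal.span {π₁} ≠ Ideal.span ({π₃} : Set (𝓞 K)) ∧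
      Ideal.span {π₂} ≠ Ideal.span ({π₃} : Set (𝓞 K))) ∧
    (Algebra.norm ℤ π₁ % 4 = 1 ∧ Algebra.norm ℤ π₂ % 4 = 1 ∧ Algebra.norm ℤ π₃ % 4 = 1) ∧
    ((∃ x : 𝓞 K, π₁ ∣ (x ^ 2 - (ε : 𝓞 K))) ∧
      (∃ x : 𝓞 K, π₂ ∣ (x ^ 2 - (ε : 𝓞 K))) ∧
      (∃ x : 𝓞 K, π₃ ∣ (x ^ 2 - (ε : 𝓞 K)))) ∧
    ((∃ x : 𝓞 K, π₂ ∣ (x ^ 2 - π₁)) ∧ (∃ x : 𝓞 K, π₁ ∣ (x ^ 2 - π₂)) ∧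
      (∃ x : 𝓞 K, π₃ ∣ (x ^ 2 - π₁)) ∧ (∃ x : 𝓞 K, π₁ ∣ (x ^ 2 - π₃)) ∧
      (∃ x : 𝓞 K, π₃ ∣ (x ^ 2 - π₂)) ∧ (∃ x : 𝓞 K, π₂ ∣ (x ^ 2 - π₃))) := by
  -- norm computations over ℚ
  have n1 : Algebra.norm ℚ (algebraMap (𝓞 K) K π₁) = 769 := by
    rw [h1, show (33 : K) + 8 * s = ((33 : ℚ) : K) + ((8 : ℚ) : K) * s by push_cast; ring,
      norm_eval K hdeg s hs]
    norm_num
  have n2 : Algebra.norm ℚ (algebraMap (𝓞 K) K π₂) = 289 := by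
    rw [h2, show (17 : K) = ((17 : ℚ) : K) + ((0 : ℚ) : K) * s by push_cast; ring,
      norm_eval K hdeg s hs]
    norm_num
  have n3 : Algebra.norm ℚ (algebraMap (𝓞 K) K π₃) = 101 := by
    rw [h3, show (23 + 5 * s) / 2 = ((23 / 2 : ℚ) : K) + ((5 / 2 : ℚ) : K) * s by push_cast; ring,
      norm_eval K hdeg s hs]
    norm_num
  -- norms over ℤ
  have z1 : Algebra.norm ℤ π₁ = 769 := by
    have := (Algebra.coe_norm_int (K := K) π₁).trans n1
    exact_mod_cast this
  have z2 : Algebra.norm ℤ π₂ = 289 := by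
    have := (Algebra.coe_norm_int (K := K) π₂).trans n2
    exact_mod_cast this
  have z3 : Algebra.norm ℤ π₃ = 101 := by
    have := (Algebra.coe_norm_int (K := K) π₃).trans n3
    exact_mod_cast this
  -- nonzero
  have p1ne : π₁ ≠ 0 := by
    intro h
    rw [h, map_zero] at h1
    exact sqrt5_not_rat K s hs (-(33/8)) (by push_cast; linear_combination (1/8 : K) * h1)
  have p2ne : π₂ ≠ 0 := by
    intro h
    rw [h, map_zero] at h2
    norm_num at h2
  have p3ne : π₃ ≠ 0 := by
    intro h
    rw [h, map_zero] at h3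
    exact sqrt5_not_rat K s hs (-(23/5)) (by push_cast; linear_combination (2/5 : K) * h3)
  -- absNorms
  have a1 : Ideal.absNorm (Ideal.span {π₁}) = 769 := by
    rw [Ideal.absNorm_span_singleton, z1]; norm_num
  have a2 : Ideal.absNorm (Ideal.span {π₂}) = 289 := by
    rw [Ideal.absNorm_span_singleton, z2]; norm_num
  have a3 : Ideal.absNorm (Ideal.span {π₃}) = 101 := by
    rw [Ideal.absNorm_span_singleton, z3]; norm_num
  -- primality of π₁ and π₃
  have prime1 : Prime π₁ := by
    apply Ideal.prime_of_irreducible_absNorm_span p1ne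
    rw [Ideal.absNorm_span_singleton, z1,
      show ((769 : ℤ)).natAbs = 769 by norm_num, Nat.irreducible_iff_nat_prime]
    norm_num
  have prime3 : Prime π₃ := by
    apply Ideal.prime_of_irreducible_absNorm_span p3ne
    rw [Ideal.absNorm_span_singleton, z3,
      show ((101 : ℤ)).natAbs = 101 by norm_num, Nat.irreducible_iff_nat_prime]
    norm_num
  -- square root of 5 in 𝓞 K
  have hSval : algebraMap (𝓞 K) K (2 * (ε : 𝓞 K) - 1) = s := by
    rw [map_sub, map_mul, map_ofNat, map_one, hεval]; ring
  have hSsq : (2 * (ε : 𝓞 K) - 1) ^ 2 = 5 := by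
    apply RingOfIntegers.coe_injective
    rw [map_pow, hSval, map_ofNat, hs]
  -- primality of π₂ = 17
  have prime2 : Prime π₂ := by
    have hItop : Ideal.span ({π₂} : Set (𝓞 K)) ≠ ⊤ := by
      intro h
      rw [Ideal.absNorm_eq_one_iff.mpr h] at a2
      norm_num at a2
    obtain ⟨P, hPmax, hle⟩ := Ideal.exists_le_maximal _ hItop
    have hdvdP : Ideal.absNorm P ∣ 17 ^ 2 := by
      rw [show (17 : ℕ) ^ 2 = 289 by norm_num, ← a2]
      exact Ideal.absNorm_dvd_absNorm_of_le hle
    obtain ⟨k, hk, hPk⟩ := (Nat.dvd_prime_pow (by norm_num : Nat.Prime 17)).mp hdvdP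
    interval_cases k
    · -- absNorm P = 1 : impossible
      rw [pow_zero, Ideal.absNorm_eq_one_iff] at hPk
      exact absurd hPk hPmax.ne_top
    · -- absNorm P = 17 : impossible since 5 is not a square mod 17
      exfalso
      rw [pow_one] at hPk
      haveI : Nontrivial (𝓞 K ⧸ P) := Ideal.Quotient.nontrivial_iff.mpr hPmax.ne_top
      have hcard : Nat.card (𝓞 K ⧸ P) = 17 := by
        rw [← hPk, Ideal.absNorm_apply, Submodule.cardQuot_apply]
      haveI : Finite (𝓞 K ⧸ P) := Nat.finite_of_card_ne_zero (by rw [hcard]; norm_num)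
      have h17R : ((17 : ℕ) : 𝓞 K ⧸ P) = 0 := by
        have hmem : ((17 : ℕ) : 𝓞 K) ∈ P := by rw [← hPk]; exact Ideal.absNorm_mem P
        exact (map_natCast (Ideal.Quotient.mk P) 17).symm.trans
          (Ideal.Quotient.eq_zero_iff_mem.mpr hmem)
      obtain ⟨c, hc⟩ := CharP.exists (𝓞 K ⧸ P)
      have hcdvd : c ∣ 17 := (CharP.cast_eq_zero_iff (𝓞 K ⧸ P) c 17).mp h17R
      have hc17 : c = 17 := by
        rcases (Nat.dvd_prime (by norm_num : Nat.Prime 17)).mp hcdvd with h | h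
        · exact absurd h (CharP.char_ne_one (𝓞 K ⧸ P) c)
        · exact h
      subst hc17
      haveI : CharP (𝓞 K ⧸ P) 17 := hc
      have hinj : Function.Injective (ZMod.castHom (dvd_refl 17) (𝓞 K ⧸ P)) :=
        ZMod.castHom_injective _
      have hbij : Function.Bijective (ZMod.castHom (dvd_refl 17) (𝓞 K ⧸ P)) := by
        rw [Nat.bijective_iff_injective_and_card]
        exact ⟨hinj, by rw [hcard, Nat.card_eq_fintype_card, ZMod.card]⟩
      obtain ⟨y, hy⟩ := hbij.2 (Ideal.Quotient.mk P (2 * (ε : 𝓞 K) - 1))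
      have hy2 : y ^ 2 = 5 := by
        apply hinj
        rw [map_pow, hy, ← map_pow, hSsq, map_ofNat, map_ofNat]
      have hno : ∀ z : ZMod 17, z ^ 2 ≠ 5 := by decide
      exact hno y hy2
    · -- absNorm P = 289 : then span {π₂} = P is prime
      have hdd : P ∣ Ideal.span {π₂} := Ideal.dvd_iff_le.mpr hle
      obtain ⟨Q, hQ⟩ := hdd
      have heq : (289 : ℕ) = 17 ^ 2 * Ideal.absNorm Q := by
        rw [← a2, hQ, map_mul, hPk]
      have hQ1 : Ideal.absNorm Q = 1 := by omega
      rw [Ideal.absNorm_eq_one_iff] at hQ1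
      rw [hQ1, Ideal.mul_top] at hQ
      exact (Ideal.span_singleton_prime p2ne).mp (hQ ▸ hPmax.isPrime)
  refine ⟨n1, n3, ⟨prime1, prime2, prime3⟩, ?_, ?_, ?_, ?_⟩
  · refine ⟨?_, ?_, ?_⟩ <;> intro h <;>
      [ (have := a1.symm.trans (h ▸ a2));
        (have := a1.symm.trans (h ▸ a3));
        (have := a2.symm.trans (h ▸ a3))] <;> norm_num at this
  · exact ⟨by rw [z1]; decide, by rw [z2]; decide, by rw [z3]; decide⟩
  · refine ⟨⟨(307 : 𝓞 K), (5025 : 𝓞 K) - 1961 * (ε : 𝓞 K), ?_⟩,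
      ⟨28 * (ε : 𝓞 K) - 7, (49 : 𝓞 K) + 23 * (ε : 𝓞 K), ?_⟩,
      ⟨(33 : 𝓞 K), (151 : 𝓞 K) - 54 * (ε : 𝓞 K), ?_⟩⟩ <;>
    · apply RingOfIntegers.coe_injective
      simp only [map_mul, map_sub, map_add, map_pow, map_ofNat, map_one, hεval, h1, h2, h3]
      first
        | linear_combination (7844 : K) * hs
        | linear_combination (196 : K) * hs
        | linear_combination (135 / 2 : K) * hs
  · refine ⟨⟨14 * (ε : 𝓞 K) - 4, (11 : 𝓞 K) + 4 * (ε : 𝓞 K), ?_⟩,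
      ⟨(111 : 𝓞 K), (656 : 𝓞 K) - 256 * (ε : 𝓞 K), ?_⟩,
      ⟨(28 : 𝓞 K), (106 : 𝓞 K) - 39 * (ε : 𝓞 K), ?_⟩,
      ⟨(235 : 𝓞 K), (2944 : 𝓞 K) - 1149 * (ε : 𝓞 K), ?_⟩,
      ⟨(44 : 𝓞 K), (266 : 𝓞 K) - 95 * (ε : 𝓞 K), ?_⟩,
      ⟨26 * (ε : 𝓞 K) - 8, (43 : 𝓞 K) + 15 * (ε : 𝓞 K), ?_⟩⟩ <;>
    · apply RingOfIntegers.coe_injective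
      simp only [map_mul, map_sub, map_add, map_pow, map_ofNat, map_one, hεval, h1, h2, h3]
      first
        | linear_combination (49 : K) * hs
        | linear_combination (1024 : K) * hs
        | linear_combination (195 / 4 : K) * hs
        | linear_combination (4596 : K) * hs
        | linear_combination (475 / 4 : K) * hs
        | linear_combination (169 : K) * hs
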